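/- Let K be a real n×n positive definite matrix with positive definite square root K^{1/2}, let P be a real n×m matrix, and set C = KP and W_e = PᵀKP; assume W_e is positive definite. Let K^{1/2}P = F S Nᵀ be a singular value decomposition with F an n×m matrix having orthonormal columns, N an m×m orthogonal matrix, and S an m×m diagonal matrix with positive diagonal entries (so W_e = N S² Nᵀ). Let W be any real m×m positive definite matrix with spectral decomposition W = Ñ S̃² Ñᵀ (Ñ orthogonal, S̃ diagonal positive), and define Ẽ = S Nᵀ Ñ S̃⁻² Ñᵀ N S − I_m. Then C W⁻¹ Cᵀ − C W_e⁻¹ Cᵀ = K^{1/2} F Ẽ Fᵀ K^{1/2}, and consequently ‖C W⁻¹ Cᵀ − C W_e⁻¹ Cᵀ‖₂ ≤ ‖K‖₂ · ‖Ẽ‖₂. -/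

import Mathlib

open Matrix

namespace Matrix.PosSemidef
open scoped ComplexOrder
noncomputable def sqrt {n : Type*} [Fintype n] [DecidableEq n] {𝕜 : Type*} [RCLike 𝕜]
    {A : Matrix n n 𝕜} (hA : A.PosSemidef) : Matrix n n 𝕜 :=
  hA.1.eigenvectorUnitary.1 * diagonal ((↑) ∘ (√·) ∘ hA.1.eigenvalues) *
  (star hA.1.eigenvectorUnitary : Matrix n n 𝕜)

lemma sqrt_mul_self {n : Type*} [Fintype n] [DecidableEq n] {𝕜 : Type*} [RCLike 𝕜]
    {A : Matrix n n 𝕜} (hA : A.PosSemidef) : hA.sqrt * hA.sqrt = A := by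
  conv_rhs => rw [hA.1.spectral_theorem]
  rw [Unitary.conjStarAlgAut_apply]
  have hU : (star hA.1.eigenvectorUnitary : Matrix n n 𝕜) * hA.1.eigenvectorUnitary.1 = 1 :=
    Unitary.coe_star_mul_self _
  simp only [sqrt, Matrix.mul_assoc]
  rw [← Matrix.mul_assoc _ hA.1.eigenvectorUnitary.1, hU, Matrix.one_mul,
    ← Matrix.mul_assoc (diagonal _) (diagonal _), diagonal_mul_diagonal]
  congr 3
  funext i
  simp only [Function.comp_apply]
  rw [← RCLike.ofReal_mul, Real.mul_self_sqrt (hA.eigenvalues_nonneg i)]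

lemma isHermitian_sqrt {n : Type*} [Fintype n] [DecidableEq n] {𝕜 : Type*} [RCLike 𝕜]
    {A : Matrix n n 𝕜} (hA : A.PosSemidef) : hA.sqrt.IsHermitian := by
  have h := isHermitian_mul_mul_conjTranspose (hA.1.eigenvectorUnitary.1)
    (A := diagonal ((↑) ∘ (√·) ∘ hA.1.eigenvalues)) (by
      rw [isHermitian_diagonal_iff]; intro i; simp [isSelfAdjoint_iff])
  exact h
end Matrix.PosSemidef

/-- Spectral norm (largest singular value / ℓ²→ℓ² operator norm) of a real matrix. -/
noncomputable def specNorm {α β : Type*} [Fintype α] [Fintype β] [DecidableEq α] [DecidableEq β]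
    (A : Matrix α β ℝ) : ℝ :=
  ‖(Matrix.toEuclideanLin A).toContinuousLinearMap‖

lemma toEuclideanLin_mul' {a b c : Type*} [Fintype a] [Fintype b] [Fintype c]
    [DecidableEq b] [DecidableEq c] (A : Matrix a b ℝ) (B : Matrix b c ℝ) :
    Matrix.toEuclideanLin (A * B) = (Matrix.toEuclideanLin A).comp (Matrix.toEuclideanLin B) := by
  apply LinearMap.ext
  intro v
  simp [Matrix.toEuclideanLin_apply, Matrix.mulVec_mulVec]

lemma toCLM_mul {a b c : Type*} [Fintype a] [Fintype b] [Fintype c]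
    [DecidableEq b] [DecidableEq c] (A : Matrix a b ℝ) (B : Matrix b c ℝ) :
    (Matrix.toEuclideanLin (A * B)).toContinuousLinearMap =
      (Matrix.toEuclideanLin A).toContinuousLinearMap.comp
        (Matrix.toEuclideanLin B).toContinuousLinearMap := by
  ext v
  simp [toEuclideanLin_mul']

lemma specNorm_mul_le {a b c : Type*} [Fintype a] [Fintype b] [Fintype c]
    [DecidableEq a] [DecidableEq b] [DecidableEq c] (A : Matrix a b ℝ) (B : Matrix b c ℝ) :
    specNorm (A * B) ≤ specNorm A * specNorm B := by
  rw [specNorm, toCLM_mul]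
  exact ContinuousLinearMap.opNorm_comp_le _ _

lemma specNorm_nonneg {a b : Type*} [Fintype a] [Fintype b] [DecidableEq a] [DecidableEq b]
    (A : Matrix a b ℝ) : 0 ≤ specNorm A := norm_nonneg _

lemma specNorm_transpose_mul_self {a b : Type*} [Fintype a] [Fintype b] [DecidableEq a]
    [DecidableEq b] (A : Matrix a b ℝ) : specNorm (Aᵀ * A) = specNorm A * specNorm A := by
  have hA : Aᵀ = Aᴴ := (Matrix.conjTranspose_eq_transpose_of_trivial A).symm
  rw [specNorm, hA, toEuclideanLin_mul', Matrix.toEuclideanLin_conjTranspose_eq_adjoint]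
  have h2 : (LinearMap.adjoint (Matrix.toEuclideanLin A) ∘ₗ Matrix.toEuclideanLin A).toContinuousLinearMap
      = ContinuousLinearMap.adjoint (Matrix.toEuclideanLin A).toContinuousLinearMap
        ∘L (Matrix.toEuclideanLin A).toContinuousLinearMap := by
    ext v
    rw [← LinearMap.adjoint_toContinuousLinearMap]
    rfl
  rw [h2, ContinuousLinearMap.norm_adjoint_comp_self]
  rfl

lemma specNorm_one_le {a : Type*} [Fintype a] [DecidableEq a] :
    specNorm (1 : Matrix a a ℝ) ≤ 1 := by
  have h : (Matrix.toEuclideanLin (1 : Matrix a a ℝ)).toContinuousLinearMap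
      = ContinuousLinearMap.id ℝ (EuclideanSpace ℝ a) := by
    ext v
    simp [Matrix.toEuclideanLin_apply]
  rw [specNorm, h]
  exact ContinuousLinearMap.norm_id_le

lemma specNorm_transpose {a b : Type*} [Fintype a] [Fintype b] [DecidableEq a] [DecidableEq b]
    (A : Matrix a b ℝ) : specNorm Aᵀ = specNorm A := by
  have hA : Aᵀ = Aᴴ := (Matrix.conjTranspose_eq_transpose_of_trivial A).symm
  rw [specNorm, hA, Matrix.toEuclideanLin_conjTranspose_eq_adjoint,
    LinearMap.adjoint_toContinuousLinearMap, LinearIsometryEquiv.norm_map]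
  rfl


/-- Final step of Theorem 3: the difference of the two Nyström approximations equals
K^{1/2} F Ẽ Fᵀ K^{1/2}, whence its spectral norm is at most ‖K‖₂·‖Ẽ‖₂. -/
theorem stmt_16 {n m : ℕ} (K : Matrix (Fin n) (Fin n) ℝ) (hK : K.PosDef)
    (P : Matrix (Fin n) (Fin m) ℝ)
    (C : Matrix (Fin n) (Fin m) ℝ) (We : Matrix (Fin m) (Fin m) ℝ)
    (hC : C = K * P) (hWe_def : We = Pᵀ * K * P) (hWe : We.PosDef)
    -- singular value decomposition K^{1/2} P = F S Nᵀ
    (F : Matrix (Fin n) (Fin m) ℝ) (N : Matrix (Fin m) (Fin m) ℝ) (s : Fin m → ℝ)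
    (hF : Fᵀ * F = 1) (hN : Nᵀ * N = 1) (hs : ∀ i, 0 < s i)
    (hSVD : hK.posSemidef.sqrt * P = F * Matrix.diagonal s * Nᵀ)
    -- W is any positive definite matrix with spectral decomposition W = Ñ S̃² Ñᵀ
    (W : Matrix (Fin m) (Fin m) ℝ) (hW : W.PosDef)
    (Nt : Matrix (Fin m) (Fin m) ℝ) (t : Fin m → ℝ)
    (hNt : Ntᵀ * Nt = 1) (ht : ∀ i, 0 < t i)
    (hW_spec : W = Nt * Matrix.diagonal (fun i => t i ^ 2) * Ntᵀ)
    (Et : Matrix (Fin m) (Fin m) ℝ)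
    (hEt : Et = Matrix.diagonal s * Nᵀ * Nt * Matrix.diagonal (fun i => (t i ^ 2)⁻¹) *
        Ntᵀ * N * Matrix.diagonal s - 1) :
    C * W⁻¹ * Cᵀ - C * We⁻¹ * Cᵀ = hK.posSemidef.sqrt * F * Et * Fᵀ * hK.posSemidef.sqrt ∧
    specNorm (C * W⁻¹ * Cᵀ - C * We⁻¹ * Cᵀ) ≤ specNorm K * specNorm Et := by
  obtain ⟨Q, hQdef⟩ : ∃ Q, hK.posSemidef.sqrt = Q := ⟨_, rfl⟩
  have hQQ : Q * Q = K := by rw [← hQdef]; exact hK.posSemidef.sqrt_mul_self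
  have hQsym : Qᵀ = Q := by
    rw [← hQdef, ← Matrix.conjTranspose_eq_transpose_of_trivial]
    exact hK.posSemidef.isHermitian_sqrt
  rw [hQdef] at hSVD
  rw [hQdef]
  have hNN' : N * Nᵀ = 1 := mul_eq_one_comm.mp hN
  have hNtNt' : Nt * Ntᵀ = 1 := mul_eq_one_comm.mp hNt
  have cN : ∀ {k : ℕ} (X : Matrix (Fin m) (Fin k) ℝ), Nᵀ * (N * X) = X := fun X => by
    rw [← Matrix.mul_assoc, hN, Matrix.one_mul]
  have cN' : ∀ {k : ℕ} (X : Matrix (Fin m) (Fin k) ℝ), N * (Nᵀ * X) = X := fun X => by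
    rw [← Matrix.mul_assoc, hNN', Matrix.one_mul]
  have cNt : ∀ {k : ℕ} (X : Matrix (Fin m) (Fin k) ℝ), Ntᵀ * (Nt * X) = X := fun X => by
    rw [← Matrix.mul_assoc, hNt, Matrix.one_mul]
  have cF : ∀ {k : ℕ} (X : Matrix (Fin m) (Fin k) ℝ), Fᵀ * (F * X) = X := fun X => by
    rw [← Matrix.mul_assoc, hF, Matrix.one_mul]
  have hsne : ∀ i, s i ≠ 0 := fun i => (hs i).ne'
  have hs2 : (fun i => s i ^ 2 * (s i ^ 2)⁻¹) = fun _ => (1 : ℝ) := by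
    funext i; exact mul_inv_cancel₀ (pow_ne_zero 2 (hsne i))
  have ht2 : (fun i => t i ^ 2 * (t i ^ 2)⁻¹) = fun _ => (1 : ℝ) := by
    funext i; exact mul_inv_cancel₀ (pow_ne_zero 2 (ht i).ne')
  have cD : ∀ {k : ℕ} (X : Matrix (Fin m) (Fin k) ℝ),
      Matrix.diagonal s * (Matrix.diagonal (fun i => (s i ^ 2)⁻¹) * (Matrix.diagonal s * X)) = X := by
    intro k X
    rw [← Matrix.mul_assoc, ← Matrix.mul_assoc, Matrix.diagonal_mul_diagonal,
      Matrix.diagonal_mul_diagonal]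
    have h : (fun i => s i * (s i ^ 2)⁻¹ * s i) = fun _ => (1 : ℝ) := by
      funext i
      have := hsne i
      field_simp
    rw [h, Matrix.diagonal_one, Matrix.one_mul]
  have hC' : C = Q * (F * Matrix.diagonal s * Nᵀ) := by
    rw [hC, ← hQQ, Matrix.mul_assoc, hSVD]
  have hCt : Cᵀ = N * (Matrix.diagonal s * (Fᵀ * Q)) := by
    rw [hC']
    simp [Matrix.transpose_mul, Matrix.diagonal_transpose, hQsym, Matrix.mul_assoc]
  have hWinv : W⁻¹ = Nt * (Matrix.diagonal (fun i => (t i ^ 2)⁻¹) * Ntᵀ) := by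
    apply Matrix.inv_eq_right_inv
    rw [hW_spec, Matrix.mul_assoc, Matrix.mul_assoc, cNt,
      ← Matrix.mul_assoc (Matrix.diagonal fun i => t i ^ 2), Matrix.diagonal_mul_diagonal, ht2,
      Matrix.diagonal_one, Matrix.one_mul, hNtNt']
  have hWe' : We = N * ((Matrix.diagonal fun i => s i ^ 2) * Nᵀ) := by
    have h1 : We = (Q * P)ᵀ * (Q * P) := by
      rw [hWe_def, ← hQQ, Matrix.transpose_mul, hQsym]
      simp [Matrix.mul_assoc]
    rw [h1, hSVD]
    simp only [Matrix.transpose_mul, Matrix.transpose_transpose, Matrix.diagonal_transpose,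
      Matrix.mul_assoc]
    rw [cF, ← Matrix.mul_assoc (Matrix.diagonal s), Matrix.diagonal_mul_diagonal]
    congr 2
    funext i; ring
  have hWeinv : We⁻¹ = N * (Matrix.diagonal (fun i => (s i ^ 2)⁻¹) * Nᵀ) := by
    apply Matrix.inv_eq_right_inv
    rw [hWe', Matrix.mul_assoc, Matrix.mul_assoc, cN,
      ← Matrix.mul_assoc (Matrix.diagonal fun i => s i ^ 2), Matrix.diagonal_mul_diagonal, hs2,
      Matrix.diagonal_one, Matrix.one_mul, hNN']
  have key : C * W⁻¹ * Cᵀ - C * We⁻¹ * Cᵀ = Q * F * Et * Fᵀ * Q := by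
    rw [hCt, hC', hWinv, hWeinv, hEt]
    simp only [Matrix.mul_sub, Matrix.sub_mul, Matrix.mul_one, Matrix.one_mul, Matrix.mul_assoc]
    simp only [cN, cN', cNt, cF, cD]
  refine ⟨key, ?_⟩
  rw [key]
  have hFle : specNorm F ≤ 1 := by
    have h1 := specNorm_transpose_mul_self F
    rw [hF] at h1
    nlinarith [specNorm_one_le (a := Fin m), specNorm_nonneg F]
  have hFtle : specNorm Fᵀ ≤ 1 := by rw [specNorm_transpose]; exact hFle
  have hKQ : specNorm K = specNorm Q * specNorm Q := by
    rw [← hQQ]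
    nth_rewrite 1 [← hQsym]
    rw [specNorm_transpose_mul_self]
  have b1 : specNorm (Q * F * Et * Fᵀ * Q) ≤
      specNorm Q * specNorm F * specNorm Et * specNorm Fᵀ * specNorm Q := by
    calc specNorm (Q * F * Et * Fᵀ * Q) ≤ specNorm (Q * F * Et * Fᵀ) * specNorm Q :=
          specNorm_mul_le _ _
      _ ≤ specNorm (Q * F * Et) * specNorm Fᵀ * specNorm Q := by
          gcongr ?_ * _; exacts [specNorm_nonneg _, specNorm_mul_le _ _]
      _ ≤ specNorm (Q * F) * specNorm Et * specNorm Fᵀ * specNorm Q := by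
          gcongr (?_ * _) * _; exacts [specNorm_nonneg _, specNorm_nonneg _, specNorm_mul_le _ _]
      _ ≤ specNorm Q * specNorm F * specNorm Et * specNorm Fᵀ * specNorm Q := by
          gcongr ((?_ * _) * _) * _
          exacts [specNorm_nonneg _, specNorm_nonneg _, specNorm_nonneg _, specNorm_mul_le _ _]
  refine b1.trans ?_
  rw [hKQ]
  have h0 := specNorm_nonneg Q
  have h1 := specNorm_nonneg Et
  have h2 := specNorm_nonneg F
  have h3 := specNorm_nonneg Fᵀ
  calc specNorm Q * specNorm F * specNorm Et * specNorm Fᵀ * specNorm Q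
      ≤ specNorm Q * 1 * specNorm Et * 1 * specNorm Q := by gcongr
    _ = specNorm Q * specNorm Q * specNorm Et := by ring
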